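/- There is a universal constant C > 0 with the following property. Let G be a connected, locally finite simple graph such that (V_G, d_G) admits a threshold embedding with distortion D into a real Hilbert space. Then for every finite subset S ⊆ V_G and every t ∈ ℕ, the stationary random walk {Z_t} restricted to S satisfies E[ d_G(Z_0, Z_t)² ] ≤ C D² t; that is, the graphic Markov type 2 constant of G is at most √C · D. -/

import Mathlib

open MeasureTheory
open scoped Classical

noncomputable section

universe u v w

/-- The transition matrix of the random walk restricted to a finite set `S` of vertices. -/
def restP {V : Type*} (G : SimpleGraph V) [∀ v, Fintype (G.neighborSet v)] (S : Finset V) :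
    Matrix ↥S ↥S ℝ := fun x y =>
  if (x : V) = (y : V) then ((G.neighborFinset (x : V)) \ S).card / (G.degree (x : V) : ℝ)
  else if G.Adj (x : V) (y : V) then 1 / (G.degree (x : V) : ℝ) else 0

/-- The stationary measure `π(x) = deg_G(x) / μ_G(S)` of the walk restricted to `S`. -/
def restPi {V : Type*} (G : SimpleGraph V) [∀ v, Fintype (G.neighborSet v)] (S : Finset V)
    (x : ↥S) : ℝ := (G.degree (x : V) : ℝ) / ∑ z ∈ S, (G.degree z : ℝ)

/-- `Z` is (a realization, on a probability space `(Ω,μ)`, of) the stationary random walk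
restricted to `S`. -/
def IsStationaryRestrictedWalk {V : Type*} (G : SimpleGraph V) [∀ v, Fintype (G.neighborSet v)]
    (S : Finset V) {Ω : Type*} [MeasurableSpace Ω] (μ : Measure Ω) (Z : ℕ → Ω → ↥S) : Prop :=
  (∀ (t : ℕ) (s : Set ↥S), MeasurableSet (Z t ⁻¹' s)) ∧
  ∀ (m : ℕ) (x : Fin (m + 1) → ↥S),
    μ {ω | ∀ i : Fin (m + 1), Z (i : ℕ) ω = x i} =
      ENNReal.ofReal (restPi G S (x 0) * ∏ i : Fin m, restP G S (x i.castSucc) (x i.succ))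

namespace MarkovCor

variable {σ : Type*} [Fintype σ]

/-- path weight -/
def pw (P : σ → σ → ℝ) (p0 : σ → ℝ) : (n : ℕ) → (Fin (n+1) → σ) → ℝ :=
  fun n z => p0 (z 0) * ∏ i : Fin n, P (z i.castSucc) (z i.succ)

variable {P : σ → σ → ℝ} {p0 : σ → ℝ}

omit [Fintype σ] in
lemma pw_nonneg (hP : ∀ x y, 0 ≤ P x y) (hp0 : ∀ x, 0 ≤ p0 x) (n : ℕ)
    (z : Fin (n+1) → σ) : 0 ≤ pw P p0 n z :=
  mul_nonneg (hp0 _) (Finset.prod_nonneg fun _ _ => hP _ _)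

omit [Fintype σ] in
lemma pw_snoc (n : ℕ) (w : Fin (n+1) → σ) (y : σ) :
    pw P p0 (n+1) (Fin.snoc w y) = pw P p0 n w * P (w (Fin.last n)) y := by
  unfold pw
  have key : ∏ i : Fin (n+1),
      P ((Fin.snoc w y : Fin (n+2) → σ) i.castSucc) ((Fin.snoc w y : Fin (n+2) → σ) i.succ)
      = (∏ i : Fin n, P (w i.castSucc) (w i.succ)) * P (w (Fin.last n)) y := by
    rw [Fin.prod_univ_castSucc
      (f := fun i : Fin (n+1) => P ((Fin.snoc w y : Fin (n+2) → σ) i.castSucc)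
        ((Fin.snoc w y : Fin (n+2) → σ) i.succ))]
    congr 1
    · apply Finset.prod_congr rfl
      intro i _
      congr 1
      · rw [Fin.snoc_castSucc]
      · rw [Fin.succ_castSucc, Fin.snoc_castSucc]
    · congr 1
      · rw [Fin.snoc_castSucc]
      · show (Fin.snoc w y : Fin (n+2) → σ) (Fin.last (n+1)) = y
        rw [Fin.snoc_last]
  rw [key]
  have h0 : (Fin.snoc w y : Fin (n+2) → σ) 0 = w 0 := by
    show (Fin.snoc w y : Fin (n+2) → σ) (Fin.castSucc 0) = w 0
    rw [Fin.snoc_castSucc]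
  rw [h0]; ring

/-- sum over snoc decomposition -/
lemma sum_snoc {n : ℕ} (F : (Fin (n+2) → σ) → ℝ) :
    ∑ z : Fin (n+2) → σ, F z = ∑ w : Fin (n+1) → σ, ∑ y : σ, F (Fin.snoc w y) := by
  classical
  have := Fintype.sum_equiv (Fin.snocEquiv (fun _ : Fin (n+2) => σ))
    (fun q => F (Fin.snocEquiv _ q)) F (fun q => rfl)
  rw [← this, Fintype.sum_prod_type]
  rw [Finset.sum_comm]
  rfl

lemma peel (hrow : ∀ x, ∑ y : σ, P x y = 1) {n : ℕ} (ψ : (Fin (n+2) → σ) → ℝ) :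
    ∑ z : Fin (n+2) → σ, pw P p0 (n+1) z * ψ z
      = ∑ w : Fin (n+1) → σ, pw P p0 n w *
          ∑ y : σ, P (w (Fin.last n)) y * ψ (Fin.snoc w y) := by
  rw [sum_snoc (fun z => pw P p0 (n+1) z * ψ z)]
  apply Finset.sum_congr rfl
  intro w _
  rw [Finset.mul_sum]
  apply Finset.sum_congr rfl
  intro y _
  rw [pw_snoc]; ring

lemma marg (hrow : ∀ x, ∑ y : σ, P x y = 1) (m j : ℕ) (φ : (Fin (m+1) → σ) → ℝ) :
    ∑ z : Fin (m+j+1) → σ, pw P p0 (m+j) z *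
        φ (fun i => z (Fin.castLE (by omega) i))
      = ∑ w : Fin (m+1) → σ, pw P p0 m w * φ w := by
  induction j with
  | zero =>
    apply Finset.sum_congr rfl
    intro z _
    congr 1
  | succ j ih =>
    have hpeel := peel (p0 := p0) hrow
      (n := m + j) (fun z => φ (fun i => z (Fin.castLE (by omega) i)))
    have step1 : (∑ z : Fin (m+(j+1)+1) → σ, pw P p0 (m+(j+1)) z *
        φ (fun i => z (Fin.castLE (by omega) i)))
        = ∑ z : Fin ((m+j)+1+1) → σ, pw P p0 ((m+j)+1) z *
          φ (fun i => z (Fin.castLE (by omega) i)) := rfl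
    rw [step1, hpeel]
    rw [← ih]
    apply Finset.sum_congr rfl
    intro w _
    have harg : ∀ y : σ, (fun i : Fin (m+1) =>
        (Fin.snoc w y : Fin (m+j+2) → σ) (Fin.castLE (by omega) i))
        = (fun i : Fin (m+1) => w (Fin.castLE (by omega) i)) := by
      intro y
      funext i
      have : (Fin.castLE (by omega : m+1 ≤ m+j+2) i)
          = Fin.castSucc (Fin.castLE (by omega : m+1 ≤ m+j+1) i) := by
        apply Fin.ext; simp
      rw [this, Fin.snoc_castSucc]
    have : ∑ y : σ, P (w (Fin.last (m+j))) y *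
        φ (fun i : Fin (m+1) => (Fin.snoc w y : Fin (m+j+2) → σ) (Fin.castLE (by omega) i))
        = ∑ y : σ, P (w (Fin.last (m+j))) y *
          φ (fun i : Fin (m+1) => w (Fin.castLE (by omega) i)) := by
      apply Finset.sum_congr rfl
      intro y _
      rw [harg y]
    rw [this, ← Finset.sum_mul, hrow, one_mul]

lemma sum_pw_one (hrow : ∀ x, ∑ y : σ, P x y = 1) (hp1 : ∑ x : σ, p0 x = 1) (n : ℕ) :
    ∑ z : Fin (n+1) → σ, pw P p0 n z = 1 := by
  have := marg (p0 := p0) hrow 0 n (fun _ => 1)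
  simp only [mul_one] at this
  rw [show 0 + n = n from by omega] at this
  rw [this]
  have : ∀ w : Fin 1 → σ, pw P p0 0 w = p0 (w 0) := by
    intro w; unfold pw; simp
  rw [Finset.sum_congr rfl (fun w _ => this w)]
  rw [← hp1]
  exact Fintype.sum_equiv (Equiv.funUnique (Fin 1) σ) _ _ (fun w => rfl)

lemma pw_rev (hP : ∀ x y, 0 ≤ P x y) (hpos : ∀ x, 0 < p0 x)
    (hrev : ∀ x y, p0 x * P x y = p0 y * P y x) (n : ℕ) (z : Fin (n+1) → σ) :
    pw P p0 n (z ∘ Fin.rev) = pw P p0 n z := by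
  have e0 : (z ∘ Fin.rev) 0 = z (Fin.last n) := by
    show z (Fin.rev 0) = z (Fin.last n)
    rw [Fin.rev_zero]
  have eprod : ∏ i : Fin n, P ((z ∘ Fin.rev) i.castSucc) ((z ∘ Fin.rev) i.succ)
      = ∏ i : Fin n, P (z i.succ) (z i.castSucc) := by
    have h1 : ∀ i : Fin n, P ((z ∘ Fin.rev) i.castSucc) ((z ∘ Fin.rev) i.succ)
        = P (z i.rev.succ) (z i.rev.castSucc) := by
      intro i
      show P (z (Fin.rev i.castSucc)) (z (Fin.rev i.succ)) = _
      rw [Fin.rev_castSucc, Fin.rev_succ]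
    rw [Finset.prod_congr rfl (fun i _ => h1 i)]
    exact Fintype.prod_equiv Fin.revPerm _ _ (fun i => rfl)
  have hform : pw P p0 n (z ∘ Fin.rev)
      = p0 (z (Fin.last n)) * ∏ i : Fin n, P (z i.succ) (z i.castSucc) := by
    unfold pw
    rw [e0, eprod]
  have B : (0:ℝ) < ∏ i : Fin n, p0 (z i.castSucc) :=
    Finset.prod_pos (fun i _ => hpos _)
  apply mul_right_cancel₀ (ne_of_gt B)
  rw [hform]
  have hgroup : p0 (z 0) * ∏ i : Fin n, p0 (z i.succ)
      = (∏ i : Fin n, p0 (z i.castSucc)) * p0 (z (Fin.last n)) := by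
    rw [← Fin.prod_univ_succ (f := fun i : Fin (n+1) => p0 (z i))]
    rw [← Fin.prod_univ_castSucc (f := fun i : Fin (n+1) => p0 (z i))]
  have hbal : ∏ i : Fin n, (p0 (z i.castSucc) * P (z i.castSucc) (z i.succ))
      = ∏ i : Fin n, (p0 (z i.succ) * P (z i.succ) (z i.castSucc)) :=
    Finset.prod_congr rfl (fun i _ => hrev _ _)
  have h2 : p0 (z (Fin.last n)) * ∏ i : Fin n, p0 (z i.castSucc)
      = p0 (z 0) * ∏ i : Fin n, p0 (z i.succ) := by rw [hgroup]; ring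
  calc (p0 (z (Fin.last n)) * ∏ i : Fin n, P (z i.succ) (z i.castSucc)) *
        ∏ i : Fin n, p0 (z i.castSucc)
      = (p0 (z (Fin.last n)) * ∏ i : Fin n, p0 (z i.castSucc)) *
        ∏ i : Fin n, P (z i.succ) (z i.castSucc) := by ring
    _ = (p0 (z 0) * ∏ i : Fin n, p0 (z i.succ)) *
        ∏ i : Fin n, P (z i.succ) (z i.castSucc) := by rw [h2]
    _ = p0 (z 0) * ∏ i : Fin n, (p0 (z i.succ) * P (z i.succ) (z i.castSucc)) := by
        rw [Finset.prod_mul_distrib]; ring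
    _ = p0 (z 0) * ∏ i : Fin n, (p0 (z i.castSucc) * P (z i.castSucc) (z i.succ)) := by
        rw [hbal]
    _ = pw P p0 n z * ∏ i : Fin n, p0 (z i.castSucc) := by
        unfold pw
        rw [Finset.prod_mul_distrib]; ring

lemma sum_rev (hP : ∀ x y, 0 ≤ P x y) (hpos : ∀ x, 0 < p0 x)
    (hrev : ∀ x y, p0 x * P x y = p0 y * P y x) (n : ℕ) (Φ : (Fin (n+1) → σ) → ℝ) :
    ∑ z : Fin (n+1) → σ, pw P p0 n z * Φ (z ∘ Fin.rev)
      = ∑ z : Fin (n+1) → σ, pw P p0 n z * Φ z := by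
  have hinv : Function.Involutive (fun z : Fin (n+1) → σ => z ∘ Fin.rev) := by
    intro z; funext i; simp [Function.comp, Fin.rev_rev]
  exact (Fintype.sum_bijective _ hinv.bijective
    (fun z => pw P p0 n z * Φ z) (fun z => pw P p0 n z * Φ (z ∘ Fin.rev))
    (fun z => by
      show pw P p0 n z * Φ z = pw P p0 n (z ∘ Fin.rev) * Φ ((z ∘ Fin.rev) ∘ Fin.rev)
      rw [pw_rev hP hpos hrev, show (z ∘ Fin.rev) ∘ Fin.rev = z from hinv z])).symm

open scoped RealInnerProductSpace

lemma pow4_le (a b c : ℝ) (ha : 0 ≤ a) (hb : 0 ≤ b) (hc : 0 ≤ c) :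
    (a+b+c)^4 ≤ 27*(a^4+b^4+c^4) := by
  have h1 : (a+b+c)^2 ≤ 3*(a^2+b^2+c^2) := by
    nlinarith [sq_nonneg (a-b), sq_nonneg (b-c), sq_nonneg (a-c)]
  have h2 : (a+b+c)^4 = ((a+b+c)^2)^2 := by ring
  have h3 : ((a+b+c)^2)^2 ≤ (3*(a^2+b^2+c^2))^2 :=
    pow_le_pow_left₀ (sq_nonneg _) h1 2
  have h4 : (3*(a^2+b^2+c^2))^2 ≤ 27*(a^4+b^4+c^4) := by
    nlinarith [sq_nonneg (a^2-b^2), sq_nonneg (b^2-c^2), sq_nonneg (a^2-c^2)]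
  linarith

variable {H : Type*} [NormedAddCommGroup H] [InnerProductSpace ℝ H]

lemma marg' (hrow : ∀ x, ∑ y : σ, P x y = 1) {m n : ℕ} (hmn : m ≤ n)
    (φ : (Fin (m+1) → σ) → ℝ) :
    ∑ z : Fin (n+1) → σ, pw P p0 n z *
        φ (fun i => z (Fin.castLE (by omega) i))
      = ∑ w : Fin (m+1) → σ, pw P p0 m w * φ w := by
  obtain ⟨j, rfl⟩ := Nat.le.dest hmn
  exact marg hrow m j φ

lemma key_ineq (b n e : ℝ) (hb : |b| ≤ n*e) (he : e ≤ 2) (hn : 0 ≤ n) (he0 : 0 ≤ e) :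
    4*b^2 + 2*n^2*e^2 + 4*b*e^2 + e^4 ≤ 40*n^2 + 32 := by
  have h1 : b^2 ≤ (n*e)^2 := by
    have := pow_le_pow_left₀ (abs_nonneg b) hb 2
    rwa [sq_abs] at this
  have h2 : b*e^2 ≤ (n*e)*e^2 :=
    mul_le_mul_of_nonneg_right (le_trans (le_abs_self b) hb) (sq_nonneg e)
  have h3 : e^2 ≤ 4 := by nlinarith
  have h4 : n*e ≤ 2*n := by nlinarith
  nlinarith [sq_nonneg (n-1), mul_nonneg hn he0, sq_nonneg n, sq_nonneg e]

set_option maxHeartbeats 1000000 in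
lemma fourth_moment (hP : ∀ x y, 0 ≤ P x y) (hrow : ∀ x, ∑ y : σ, P x y = 1)
    (hpos : ∀ x, 0 < p0 x) (hp1 : ∑ x : σ, p0 x = 1)
    (hrev : ∀ x y, p0 x * P x y = p0 y * P y x)
    (f : σ → H) (hstep : ∀ x y, P x y ≠ 0 → ‖f x - f y‖ ≤ 1) (t : ℕ) :
    ∑ z : Fin (t+1) → σ, pw P p0 t z * ‖f (z (Fin.last t)) - f (z 0)‖^4
      ≤ 270*(t:ℝ)^2 + 108*t + 27 := by
  classical
  set Pf : σ → H := fun x => ∑ y : σ, P x y • f y with hPf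
  set g : σ → H := fun x => Pf x - f x with hg
  set idx : ℕ → Fin (t+1) := fun s => ⟨min s t, by omega⟩ with hidx
  set M : ℕ → (Fin (t+1) → σ) → H :=
    fun s z => f (z (idx s)) - f (z (idx 0)) - ∑ i ∈ Finset.range s, g (z (idx i)) with hM
  have hpw0 : ∀ z : Fin (t+1) → σ, 0 ≤ pw P p0 t z := pw_nonneg hP (fun x => (hpos x).le) t
  have htot : ∑ z : Fin (t+1) → σ, pw P p0 t z = 1 := sum_pw_one hrow hp1 t
  -- g is bounded by 1
  have hgsum : ∀ x, g x = ∑ y : σ, P x y • (f y - f x) := by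
    intro x
    rw [hg, hPf]
    simp only [smul_sub, Finset.sum_sub_distrib, ← Finset.sum_smul, hrow, one_smul]
  have h_g1 : ∀ x, ‖g x‖ ≤ 1 := by
    intro x
    rw [hgsum x]
    calc ‖∑ y : σ, P x y • (f y - f x)‖ ≤ ∑ y : σ, ‖P x y • (f y - f x)‖ :=
          norm_sum_le _ _
      _ ≤ ∑ y : σ, P x y := by
          apply Finset.sum_le_sum
          intro y _
          rw [norm_smul, Real.norm_eq_abs, abs_of_nonneg (hP x y)]
          by_cases h : P x y = 0
          · simp [h]
          · calc P x y * ‖f y - f x‖ ≤ P x y * 1 := by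
                  apply mul_le_mul_of_nonneg_left _ (hP x y)
                  rw [norm_sub_rev]; exact hstep x y h
              _ = P x y := mul_one _
      _ = 1 := hrow x
  -- the martingale orthogonality
  have hmartgen : ∀ s, s < t → ∀ h : (Fin (s+1) → σ) → H,
      ∑ z : Fin (t+1) → σ, pw P p0 t z *
        ⟪h (fun i => z (idx i.1)), f (z (idx (s+1))) - Pf (z (idx s))⟫ = 0 := by
    intro s hs h
    have hst : s + 1 ≤ t := hs
    set φ : (Fin (s+2) → σ) → ℝ := fun v =>
      ⟪h (fun i => v i.castSucc), f (v (Fin.last (s+1))) - Pf (v (Fin.last s).castSucc)⟫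
      with hφ
    have hint : ∀ z : Fin (t+1) → σ,
        (⟪h (fun i => z (idx i.1)), f (z (idx (s+1))) - Pf (z (idx s))⟫:ℝ)
          = φ (fun i => z (Fin.castLE (by omega) i)) := by
      intro z
      have hz1 : (fun i : Fin (s+1) => z (idx i.1))
          = (fun i : Fin (s+1) => z (Fin.castLE (show s+2 ≤ t+1 by omega) i.castSucc)) := by
        funext i
        have hi := i.isLt
        congr 1
        apply Fin.ext
        simp [idx]
        omega
      have hz2 : z (idx (s+1))
          = z (Fin.castLE (show s+2 ≤ t+1 by omega) (Fin.last (s+1))) := by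
        congr 1
        apply Fin.ext
        simp [idx]
        omega
      have hz3 : z (idx s)
          = z (Fin.castLE (show s+2 ≤ t+1 by omega) (Fin.last s).castSucc) := by
        congr 1
        apply Fin.ext
        simp [idx]
        omega
      calc (⟪h (fun i => z (idx i.1)), f (z (idx (s+1))) - Pf (z (idx s))⟫:ℝ)
          = ⟪h (fun i : Fin (s+1) => z (Fin.castLE (show s+2 ≤ t+1 by omega) i.castSucc)),
              f (z (Fin.castLE (show s+2 ≤ t+1 by omega) (Fin.last (s+1))))
                - Pf (z (Fin.castLE (show s+2 ≤ t+1 by omega) (Fin.last s).castSucc))⟫ := by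
            rw [hz1, hz2, hz3]
        _ = φ (fun i => z (Fin.castLE (by omega) i)) := rfl
    rw [Finset.sum_congr rfl (fun z _ => by rw [hint z])]
    rw [marg' hrow hst φ]
    rw [peel hrow φ]
    apply Finset.sum_eq_zero
    intro w _
    have hinner : ∑ y : σ, P (w (Fin.last s)) y * φ (Fin.snoc w y) = 0 := by
      have hval : ∀ y : σ, φ (Fin.snoc w y)
          = ⟪h w, f y - Pf (w (Fin.last s))⟫ := by
        intro y
        have b1 : (fun i : Fin (s+1) => (Fin.snoc w y : Fin (s+2) → σ) i.castSucc) = w := by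
          funext i; rw [Fin.snoc_castSucc]
        have b2 : (Fin.snoc w y : Fin (s+2) → σ) (Fin.last (s+1)) = y := by
          simp
        have b3 : (Fin.snoc w y : Fin (s+2) → σ) (Fin.last s).castSucc = w (Fin.last s) := by
          simp
        show (⟪h (fun i : Fin (s+1) => (Fin.snoc w y : Fin (s+2) → σ) i.castSucc),
            f ((Fin.snoc w y : Fin (s+2) → σ) (Fin.last (s+1)))
              - Pf ((Fin.snoc w y : Fin (s+2) → σ) (Fin.last s).castSucc)⟫:ℝ)
            = ⟪h w, f y - Pf (w (Fin.last s))⟫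
        rw [b1, b2, b3]
      rw [Finset.sum_congr rfl (fun y _ => by rw [hval y])]
      have : ∀ y : σ, P (w (Fin.last s)) y * ⟪h w, f y - Pf (w (Fin.last s))⟫
          = ⟪h w, P (w (Fin.last s)) y • (f y - Pf (w (Fin.last s)))⟫ := by
        intro y
        rw [real_inner_smul_right]
      rw [Finset.sum_congr rfl (fun y _ => this y)]
      rw [← inner_sum]
      have : ∑ y : σ, P (w (Fin.last s)) y • (f y - Pf (w (Fin.last s))) = 0 := by
        simp only [smul_sub, Finset.sum_sub_distrib, ← Finset.sum_smul, hrow, one_smul]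
        exact sub_self _
      rw [this, inner_zero_right]
    rw [hinner, mul_zero]
  -- support facts
  have hfac : ∀ z : Fin (t+1) → σ, pw P p0 t z ≠ 0 → ∀ s, s < t →
      P (z (idx s)) (z (idx (s+1))) ≠ 0 := by
    intro z hz s hs
    have hprod : ∏ i : Fin t, P (z i.castSucc) (z i.succ) ≠ 0 := by
      intro hc
      apply hz
      unfold pw
      rw [hc, mul_zero]
    have := (Finset.prod_ne_zero_iff.mp hprod) ⟨s, hs⟩ (Finset.mem_univ _)
    have e1 : (⟨s, hs⟩ : Fin t).castSucc = idx s := by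
      apply Fin.ext; simp [idx]; omega
    have e2 : (⟨s, hs⟩ : Fin t).succ = idx (s+1) := by
      apply Fin.ext; simp [idx]; omega
    rwa [e1, e2] at this
  have hxi2 : ∀ z : Fin (t+1) → σ, pw P p0 t z ≠ 0 → ∀ s, s < t →
      ‖f (z (idx (s+1))) - Pf (z (idx s))‖ ≤ 2 := by
    intro z hz s hs
    have h1 : ‖f (z (idx (s+1))) - f (z (idx s))‖ ≤ 1 := by
      rw [norm_sub_rev]
      exact hstep _ _ (hfac z hz s hs)
    have h2 : ‖f (z (idx s)) - Pf (z (idx s))‖ ≤ 1 := by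
      have : f (z (idx s)) - Pf (z (idx s)) = -(g (z (idx s))) := by
        rw [hg]; simp
      rw [this, norm_neg]
      exact h_g1 _
    calc ‖f (z (idx (s+1))) - Pf (z (idx s))‖
        = ‖(f (z (idx (s+1))) - f (z (idx s))) + (f (z (idx s)) - Pf (z (idx s)))‖ := by
          congr 1; abel
      _ ≤ ‖f (z (idx (s+1))) - f (z (idx s))‖ + ‖f (z (idx s)) - Pf (z (idx s))‖ :=
          norm_add_le _ _
      _ ≤ 2 := by linarith
  -- single-step decomposition
  have hMstep : ∀ s (z : Fin (t+1) → σ),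
      M (s+1) z = M s z + (f (z (idx (s+1))) - Pf (z (idx s))) := by
    intro s z
    rw [hM]
    simp only [Finset.sum_range_succ, hg]
    abel
  -- M s is a function of the first coordinates
  have hMfun : ∀ s, ∃ h : (Fin (s+1) → σ) → H,
      ∀ z : Fin (t+1) → σ, M s z = h (fun i => z (idx i.1)) := by
    intro s
    refine ⟨fun w => f (w (Fin.last s)) - f (w 0)
      - ∑ i ∈ Finset.range s, g (w (if hi : i < s+1 then ⟨i, hi⟩ else 0)), fun z => ?_⟩
    rw [hM]
    beta_reduce
    congr 1
    apply Finset.sum_congr rfl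
    intro i hi
    have hi' : i < s + 1 := by
      have := Finset.mem_range.mp hi; omega
    rw [dif_pos hi']
  -- second moment bound
  have hM2 : ∀ s, s ≤ t → ∑ z : Fin (t+1) → σ, pw P p0 t z * ‖M s z‖^2 ≤ 4*s := by
    intro s
    induction s with
    | zero =>
      intro _
      have : ∀ z : Fin (t+1) → σ, M 0 z = 0 := by
        intro z; rw [hM]; simp
      rw [Finset.sum_congr rfl (fun z _ => by rw [this z])]
      simp
    | succ s ih =>
      intro hst
      have hs : s < t := hst
      have ihs := ih (by omega)
      obtain ⟨h, hh⟩ := hMfun s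
      set ξ : (Fin (t+1) → σ) → H := fun z => f (z (idx (s+1))) - Pf (z (idx s)) with hξ
      have expand : ∀ z : Fin (t+1) → σ, pw P p0 t z * ‖M (s+1) z‖^2
          = pw P p0 t z * ‖M s z‖^2
            + (2 * (pw P p0 t z * ⟪M s z, ξ z⟫) + pw P p0 t z * ‖ξ z‖^2) := by
        intro z
        rw [hMstep s z]
        rw [show (f (z (idx (s+1))) - Pf (z (idx s))) = ξ z from rfl]
        rw [@norm_add_sq_real]
        ring
      rw [Finset.sum_congr rfl (fun z _ => expand z), Finset.sum_add_distrib,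
        Finset.sum_add_distrib]
      have hmartterm : ∑ z : Fin (t+1) → σ, pw P p0 t z * ⟪M s z, ξ z⟫ = 0 := by
        have hc : ∀ z : Fin (t+1) → σ, (⟪M s z, ξ z⟫:ℝ)
            = ⟪h (fun i => z (idx i.1)), f (z (idx (s+1))) - Pf (z (idx s))⟫ := by
          intro z
          rw [hh z]
        rw [Finset.sum_congr rfl (fun z _ => by rw [hc z])]
        exact hmartgen s hs h
      rw [← Finset.mul_sum, hmartterm, mul_zero]
      have hxiterm : ∑ z : Fin (t+1) → σ, pw P p0 t z * ‖ξ z‖^2 ≤ 4 := by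
        calc ∑ z : Fin (t+1) → σ, pw P p0 t z * ‖ξ z‖^2
            ≤ ∑ z : Fin (t+1) → σ, pw P p0 t z * 4 := by
              apply Finset.sum_le_sum
              intro z _
              by_cases hz : pw P p0 t z = 0
              · rw [hz]; simp
              · apply mul_le_mul_of_nonneg_left _ (hpw0 z)
                have := hxi2 z hz s hs
                have hn : 0 ≤ ‖ξ z‖ := norm_nonneg _
                nlinarith
          _ = 4 := by rw [← Finset.sum_mul, htot, one_mul]
      push_cast
      linarith
  -- fourth moment bound
  have hM4 : ∀ s, s ≤ t → ∑ z : Fin (t+1) → σ, pw P p0 t z * ‖M s z‖^4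
      ≤ 80*(s:ℝ)^2 + 32*s := by
    intro s
    induction s with
    | zero =>
      intro _
      have : ∀ z : Fin (t+1) → σ, M 0 z = 0 := by
        intro z; rw [hM]; simp
      rw [Finset.sum_congr rfl (fun z _ => by rw [this z])]
      simp
    | succ s ih =>
      intro hst
      have hs : s < t := hst
      have ihs := ih (by omega)
      have ih2 := hM2 s (by omega)
      obtain ⟨h, hh⟩ := hMfun s
      set ξ : (Fin (t+1) → σ) → H := fun z => f (z (idx (s+1))) - Pf (z (idx s)) with hξ
      have expand : ∀ z : Fin (t+1) → σ, pw P p0 t z * ‖M (s+1) z‖^4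
          = pw P p0 t z * ‖M s z‖^4
            + (4 * (pw P p0 t z * (‖M s z‖^2 * ⟪M s z, ξ z⟫))
              + pw P p0 t z * (4*⟪M s z, ξ z⟫^2 + 2*‖M s z‖^2*‖ξ z‖^2
                + 4*⟪M s z, ξ z⟫*‖ξ z‖^2 + ‖ξ z‖^4)) := by
        intro z
        have h4 : ‖M (s+1) z‖^4 = (‖M (s+1) z‖^2)^2 := by ring
        rw [h4, hMstep s z]
        rw [show (f (z (idx (s+1))) - Pf (z (idx s))) = ξ z from rfl]
        rw [@norm_add_sq_real]
        ring
      rw [Finset.sum_congr rfl (fun z _ => expand z), Finset.sum_add_distrib,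
        Finset.sum_add_distrib]
      have hmartterm : ∑ z : Fin (t+1) → σ,
          pw P p0 t z * (‖M s z‖^2 * ⟪M s z, ξ z⟫) = 0 := by
        have hcub : ∀ z : Fin (t+1) → σ, ‖M s z‖^2 * ⟪M s z, ξ z⟫
            = ⟪(fun w => ‖h w‖^2 • h w) (fun i => z (idx i.1)),
                f (z (idx (s+1))) - Pf (z (idx s))⟫ := by
          intro z
          rw [real_inner_smul_left, hh z]
        rw [Finset.sum_congr rfl (fun z _ => by rw [hcub z])]
        exact hmartgen s hs (fun w => ‖h w‖^2 • h w)
      rw [← Finset.mul_sum, hmartterm, mul_zero]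
      have hRterm : ∑ z : Fin (t+1) → σ,
          pw P p0 t z * (4*⟪M s z, ξ z⟫^2 + 2*‖M s z‖^2*‖ξ z‖^2
            + 4*⟪M s z, ξ z⟫*‖ξ z‖^2 + ‖ξ z‖^4)
          ≤ 40 * ∑ z : Fin (t+1) → σ, pw P p0 t z * ‖M s z‖^2
            + 32 * ∑ z : Fin (t+1) → σ, pw P p0 t z := by
        rw [Finset.mul_sum, Finset.mul_sum, ← Finset.sum_add_distrib]
        apply Finset.sum_le_sum
        intro z _
        by_cases hz : pw P p0 t z = 0
        · rw [hz]; simp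
        · have hpw : 0 < pw P p0 t z := lt_of_le_of_ne (hpw0 z) (Ne.symm hz)
          have hb : |⟪M s z, ξ z⟫| ≤ ‖M s z‖ * ‖ξ z‖ := abs_real_inner_le_norm _ _
          have he : ‖ξ z‖ ≤ 2 := hxi2 z hz s hs
          have hn : (0:ℝ) ≤ ‖M s z‖ := norm_nonneg _
          have he0 : (0:ℝ) ≤ ‖ξ z‖ := norm_nonneg _
          have key : 4*⟪M s z, ξ z⟫^2 + 2*‖M s z‖^2*‖ξ z‖^2
              + 4*⟪M s z, ξ z⟫*‖ξ z‖^2 + ‖ξ z‖^4 ≤ 40*‖M s z‖^2 + 32 :=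
            key_ineq _ _ _ hb he hn he0
          calc pw P p0 t z * (4*⟪M s z, ξ z⟫^2 + 2*‖M s z‖^2*‖ξ z‖^2
                + 4*⟪M s z, ξ z⟫*‖ξ z‖^2 + ‖ξ z‖^4)
              ≤ pw P p0 t z * (40*‖M s z‖^2 + 32) :=
                mul_le_mul_of_nonneg_left key (hpw0 z)
            _ = 40 * (pw P p0 t z * ‖M s z‖^2) + 32 * pw P p0 t z := by ring
      rw [htot] at hRterm
      push_cast
      nlinarith [hRterm, ihs, ih2]
  -- time reversal and conclusion
  have hidxlast : idx t = Fin.last t := by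
    apply Fin.ext; simp [idx]
  have hidx0 : idx 0 = 0 := by
    apply Fin.ext; simp [idx]
  have hrevM : ∀ z : Fin (t+1) → σ, M t (z ∘ Fin.rev)
      = f (z (idx 0)) - f (z (idx t)) - ∑ i ∈ Finset.range t, g (z (idx (i+1))) := by
    intro z
    have hrevidx : ∀ s, s ≤ t → (z ∘ Fin.rev) (idx s) = z (idx (t - s)) := by
      intro s hs
      show z (Fin.rev (idx s)) = z (idx (t - s))
      congr 1
      apply Fin.ext
      simp [idx, Fin.rev]
      omega
    rw [hM]
    beta_reduce
    rw [hrevidx t le_rfl, hrevidx 0 (by omega)]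
    rw [Nat.sub_self, Nat.sub_zero]
    congr 1
    have step1 : ∑ i ∈ Finset.range t, g ((z ∘ Fin.rev) (idx i))
        = ∑ i ∈ Finset.range t, g (z (idx (t - i))) := by
      apply Finset.sum_congr rfl
      intro i hi
      rw [hrevidx i (by have := Finset.mem_range.mp hi; omega)]
    rw [step1]
    rw [← Finset.sum_range_reflect (fun j => g (z (idx (j+1)))) t]
    apply Finset.sum_congr rfl
    intro i hi
    have hi' := Finset.mem_range.mp hi
    beta_reduce
    have he : t - 1 - i + 1 = t - i := by omega
    rw [he]
  have htel : ∀ z : Fin (t+1) → σ,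
      ∑ i ∈ Finset.range t, g (z (idx (i+1))) - ∑ i ∈ Finset.range t, g (z (idx i))
        = g (z (idx t)) - g (z (idx 0)) := by
    intro z
    have hA := Finset.sum_range_succ (fun i => g (z (idx i))) t
    have hB := Finset.sum_range_succ' (fun i => g (z (idx i))) t
    beta_reduce at hA hB
    rw [hA] at hB
    rw [sub_eq_sub_iff_add_eq_add]
    rw [← hB]
    exact add_comm _ _
  have hMt : ∀ z : Fin (t+1) → σ,
      M t z = f (z (idx t)) - f (z (idx 0)) - ∑ i ∈ Finset.range t, g (z (idx i)) := by
    intro z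
    rw [hM]
  have hdecomp : ∀ z : Fin (t+1) → σ,
      (2:ℝ) • (f (z (Fin.last t)) - f (z 0))
        = M t z - M t (z ∘ Fin.rev) - (g (z (idx t)) - g (z (idx 0))) := by
    intro z
    rw [← hidxlast, ← hidx0]
    have key : M t z - M t (z ∘ Fin.rev) - (g (z (idx t)) - g (z (idx 0)))
        = (f (z (idx t)) - f (z (idx 0))) + (f (z (idx t)) - f (z (idx 0)))
          + ((∑ i ∈ Finset.range t, g (z (idx (i+1))))
            - ∑ i ∈ Finset.range t, g (z (idx i)))
          - (g (z (idx t)) - g (z (idx 0))) := by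
      rw [hMt z, hrevM z]
      abel
    rw [key, htel z, two_smul]
    abel
  have hnormbound : ∀ z : Fin (t+1) → σ,
      2 * ‖f (z (Fin.last t)) - f (z 0)‖ ≤ ‖M t z‖ + ‖M t (z ∘ Fin.rev)‖ + 2 := by
    intro z
    have h2 : ‖(2:ℝ) • (f (z (Fin.last t)) - f (z 0))‖
        = 2 * ‖f (z (Fin.last t)) - f (z 0)‖ := by
      rw [norm_smul]; simp
    rw [← h2, hdecomp z]
    calc ‖M t z - M t (z ∘ Fin.rev) - (g (z (idx t)) - g (z (idx 0)))‖
        ≤ ‖M t z - M t (z ∘ Fin.rev)‖ + ‖g (z (idx t)) - g (z (idx 0))‖ := norm_sub_le _ _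
      _ ≤ (‖M t z‖ + ‖M t (z ∘ Fin.rev)‖) + (‖g (z (idx t))‖ + ‖g (z (idx 0))‖) := by
          gcongr <;> [exact norm_sub_le _ _; exact norm_sub_le _ _]
      _ ≤ ‖M t z‖ + ‖M t (z ∘ Fin.rev)‖ + 2 := by
          have := h_g1 (z (idx t)); have := h_g1 (z (idx 0)); linarith
  have hpt4 : ∀ z : Fin (t+1) → σ,
      16 * ‖f (z (Fin.last t)) - f (z 0)‖^4
        ≤ 27 * (‖M t z‖^4 + ‖M t (z ∘ Fin.rev)‖^4 + 16) := by
    intro z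
    have hb := hnormbound z
    have h0 : (0:ℝ) ≤ ‖f (z (Fin.last t)) - f (z 0)‖ := norm_nonneg _
    have h27 := pow4_le (‖M t z‖) (‖M t (z ∘ Fin.rev)‖) 2
      (norm_nonneg _) (norm_nonneg _) (by norm_num)
    have hmono : (2 * ‖f (z (Fin.last t)) - f (z 0)‖)^4
        ≤ (‖M t z‖ + ‖M t (z ∘ Fin.rev)‖ + 2)^4 := by
      apply pow_le_pow_left₀ (by positivity) hb
    nlinarith
  have hrev4 : ∑ z : Fin (t+1) → σ, pw P p0 t z * ‖M t (z ∘ Fin.rev)‖^4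
      = ∑ z : Fin (t+1) → σ, pw P p0 t z * ‖M t z‖^4 :=
    sum_rev hP hpos hrev t (fun z => ‖M t z‖^4)
  have hM4t := hM4 t le_rfl
  have main : 16 * ∑ z : Fin (t+1) → σ, pw P p0 t z * ‖f (z (Fin.last t)) - f (z 0)‖^4
      ≤ 27 * ((80*(t:ℝ)^2 + 32*t) + (80*(t:ℝ)^2 + 32*t) + 16) := by
    calc 16 * ∑ z : Fin (t+1) → σ, pw P p0 t z * ‖f (z (Fin.last t)) - f (z 0)‖^4
        = ∑ z : Fin (t+1) → σ, pw P p0 t z * (16 * ‖f (z (Fin.last t)) - f (z 0)‖^4) := by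
          rw [Finset.mul_sum]; apply Finset.sum_congr rfl; intro z _; ring
      _ ≤ ∑ z : Fin (t+1) → σ, pw P p0 t z
            * (27 * (‖M t z‖^4 + ‖M t (z ∘ Fin.rev)‖^4 + 16)) := by
          apply Finset.sum_le_sum
          intro z _
          exact mul_le_mul_of_nonneg_left (hpt4 z) (hpw0 z)
      _ = 27 * ∑ z : Fin (t+1) → σ, (pw P p0 t z * ‖M t z‖^4
            + pw P p0 t z * ‖M t (z ∘ Fin.rev)‖^4 + 16 * pw P p0 t z) := by
          rw [Finset.mul_sum]
          apply Finset.sum_congr rfl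
          intro z _
          ring
      _ = 27 * (∑ z : Fin (t+1) → σ, pw P p0 t z * ‖M t z‖^4
            + ∑ z : Fin (t+1) → σ, pw P p0 t z * ‖M t (z ∘ Fin.rev)‖^4
            + 16 * ∑ z : Fin (t+1) → σ, pw P p0 t z) := by
          rw [Finset.sum_add_distrib, Finset.sum_add_distrib, ← Finset.mul_sum]
      _ ≤ 27 * ((80*(t:ℝ)^2 + 32*t) + (80*(t:ℝ)^2 + 32*t) + 16) := by
          rw [hrev4, htot, mul_one]
          nlinarith [hM4t]
  linarith


lemma geom_tail_le (N : ℕ) : ∑ j ∈ Finset.range N, ((1:ℝ)/64)^j ≤ 2 := by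
  have h1 : ((1:ℝ)/64) ≠ 1 := by norm_num
  have hx : (0:ℝ) ≤ (1/64:ℝ)^N := by positivity
  calc ∑ j ∈ Finset.range N, ((1:ℝ)/64)^j
      = (((1:ℝ)/64)^N - 1)/((1/64:ℝ) - 1) := geom_sum_eq h1 N
    _ = (1 - ((1:ℝ)/64)^N)/(1 - (1/64:ℝ)) := by
        rw [← neg_div_neg_eq, neg_sub, neg_sub]
    _ ≤ 1/(1 - (1/64:ℝ)) := by
        gcongr
        linarith
    _ ≤ 2 := by norm_num

lemma geom_split (b : ℝ) (hb : 1 ≤ b) (n : ℕ) :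
    ∑ k ∈ Finset.range n, min ((64:ℝ)^k) (b^2/64^k) ≤ 4*b := by
  classical
  set m0 := Nat.log 64 ⌊b⌋₊ with hm0
  have hfl : ⌊b⌋₊ ≠ 0 := by
    have : 1 ≤ ⌊b⌋₊ := Nat.le_floor (by exact_mod_cast hb)
    omega
  have hlow : (64:ℝ)^m0 ≤ b := by
    have h1 : (64:ℕ)^m0 ≤ ⌊b⌋₊ := Nat.pow_log_le_self 64 hfl
    have h2 : ((64:ℕ)^m0 : ℝ) ≤ (⌊b⌋₊ : ℝ) := by exact_mod_cast h1
    have h3 : (⌊b⌋₊ : ℝ) ≤ b := Nat.floor_le (by linarith)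
    push_cast at h2
    linarith
  have hup : b ≤ (64:ℝ)^(m0+1) := by
    have h1 : ⌊b⌋₊ < 64^(m0+1) := Nat.lt_pow_succ_log_self (by norm_num) _
    have h2 : ⌊b⌋₊ + 1 ≤ 64^(m0+1) := h1
    have h3 : b < (⌊b⌋₊ : ℝ) + 1 := Nat.lt_floor_add_one b
    have h4 : ((⌊b⌋₊ + 1 : ℕ) : ℝ) ≤ ((64^(m0+1) : ℕ) : ℝ) := by exact_mod_cast h2
    push_cast at h4
    linarith
  have hsplit : ∀ k ∈ Finset.range n, min ((64:ℝ)^k) (b^2/64^k)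
      ≤ (if k ≤ m0 then (64:ℝ)^k else 0) + (if k ≤ m0 then 0 else b^2/64^k) := by
    intro k _
    by_cases hk : k ≤ m0
    · simp only [if_pos hk]
      rw [add_zero]
      exact min_le_left _ _
    · simp only [if_neg hk]
      rw [zero_add]
      exact min_le_right _ _
  have T1 : (∑ k ∈ Finset.range n, if k ≤ m0 then (64:ℝ)^k else 0) ≤ 2*b := by
    have e1 : (∑ k ∈ Finset.range n, if k ≤ m0 then (64:ℝ)^k else 0)
        = ∑ k ∈ (Finset.range n).filter (fun k => k ≤ m0), (64:ℝ)^k :=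
      (Finset.sum_filter _ _).symm
    rw [e1]
    have hsub : (Finset.range n).filter (fun k => k ≤ m0) ⊆ Finset.range (m0+1) := by
      intro k hk
      simp only [Finset.mem_filter, Finset.mem_range] at hk ⊢
      omega
    have h2 : ∑ k ∈ (Finset.range n).filter (fun k => k ≤ m0), (64:ℝ)^k
        ≤ ∑ k ∈ Finset.range (m0+1), (64:ℝ)^k := by
      apply Finset.sum_le_sum_of_subset_of_nonneg hsub
      intro k _ _
      positivity
    have h3 : ∑ k ∈ Finset.range (m0+1), (64:ℝ)^k = ((64:ℝ)^(m0+1) - 1)/(64 - 1) :=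
      geom_sum_eq (by norm_num) _
    have h4 : (64:ℝ)^(m0+1) = 64 * (64:ℝ)^m0 := by rw [pow_succ]; ring
    have h5 : ((64:ℝ)^(m0+1) - 1)/(64 - 1) ≤ 2*b := by
      rw [h4]
      rw [div_le_iff₀ (by norm_num : (0:ℝ) < 64 - 1)]
      nlinarith
    linarith
  have T2 : (∑ k ∈ Finset.range n, if k ≤ m0 then 0 else b^2/64^k) ≤ 2*b := by
    have e1 : (∑ k ∈ Finset.range n, if k ≤ m0 then 0 else b^2/64^k)
        = ∑ k ∈ (Finset.range n).filter (fun k => ¬ k ≤ m0), b^2/64^k := by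
      rw [Finset.sum_filter]
      apply Finset.sum_congr rfl
      intro k _
      rw [ite_not]
    rw [e1]
    have e2 : (Finset.range n).filter (fun k => ¬ k ≤ m0) = Finset.Ico (m0+1) n := by
      ext k
      simp only [Finset.mem_filter, Finset.mem_range, Finset.mem_Ico]
      omega
    rw [e2]
    have hb0 : (0:ℝ) ≤ b := by linarith
    have hbd : ∀ k ∈ Finset.Ico (m0+1) n, b^2/(64:ℝ)^k ≤ b * ((64:ℝ)^(m0+1)/64^k) := by
      intro k _
      have hpos : (0:ℝ) < (64:ℝ)^k := by positivity
      rw [div_le_iff₀ hpos]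
      have e3 : b * ((64:ℝ)^(m0+1)/64^k) * 64^k = b * (64:ℝ)^(m0+1) := by
        field_simp
      rw [e3]
      nlinarith
    have h3 : ∑ k ∈ Finset.Ico (m0+1) n, b^2/(64:ℝ)^k
        ≤ ∑ k ∈ Finset.Ico (m0+1) n, b * ((64:ℝ)^(m0+1)/64^k) :=
      Finset.sum_le_sum hbd
    have h4 : ∑ k ∈ Finset.Ico (m0+1) n, b * ((64:ℝ)^(m0+1)/64^k)
        = ∑ j ∈ Finset.range (n - (m0+1)), b * ((64:ℝ)^(m0+1)/64^(m0+1+j)) :=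
      Finset.sum_Ico_eq_sum_range _ _ _
    have h5 : ∀ j : ℕ, (64:ℝ)^(m0+1)/(64:ℝ)^(m0+1+j) = ((1:ℝ)/64)^j := by
      intro j
      rw [pow_add, div_pow, one_pow]
      rw [div_eq_div_iff (by positivity) (by positivity)]
      ring
    have h6 : ∑ j ∈ Finset.range (n - (m0+1)), b * ((64:ℝ)^(m0+1)/64^(m0+1+j))
        = b * ∑ j ∈ Finset.range (n - (m0+1)), ((1:ℝ)/64)^j := by
      rw [Finset.mul_sum]
      apply Finset.sum_congr rfl
      intro j _
      rw [h5]
    have h7 : b * ∑ j ∈ Finset.range (n - (m0+1)), ((1:ℝ)/64)^j ≤ b * 2 :=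
      mul_le_mul_of_nonneg_left (geom_tail_le _) hb0
    calc ∑ k ∈ Finset.Ico (m0+1) n, b^2/(64:ℝ)^k
        ≤ ∑ k ∈ Finset.Ico (m0+1) n, b * ((64:ℝ)^(m0+1)/64^k) := h3
      _ = b * ∑ j ∈ Finset.range (n - (m0+1)), ((1:ℝ)/64)^j := by rw [h4, h6]
      _ ≤ b * 2 := h7
      _ = 2 * b := by ring
  calc ∑ k ∈ Finset.range n, min ((64:ℝ)^k) (b^2/64^k)
      ≤ ∑ k ∈ Finset.range n, ((if k ≤ m0 then (64:ℝ)^k else 0)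
        + (if k ≤ m0 then 0 else b^2/64^k)) := Finset.sum_le_sum hsplit
    _ = (∑ k ∈ Finset.range n, if k ≤ m0 then (64:ℝ)^k else 0)
        + ∑ k ∈ Finset.range n, (if k ≤ m0 then 0 else b^2/64^k) :=
        Finset.sum_add_distrib
    _ ≤ 2*b + 2*b := add_le_add T1 T2
    _ = 4*b := by ring

end MarkovCor

namespace MarkovCor

variable {V : Type*} (G : SimpleGraph V) [∀ v, Fintype (G.neighborSet v)] (S : Finset V)

lemma restP_nonneg (x y : ↥S) : 0 ≤ restP G S x y := by
  unfold restP
  split_ifs <;> positivity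

lemma restPi_nonneg (x : ↥S) : 0 ≤ restPi G S x := by
  unfold restPi
  positivity

lemma restP_ne_zero_imp {x y : ↥S} (h : restP G S x y ≠ 0) :
    G.dist (x : V) (y : V) ≤ 1 := by
  unfold restP at h
  split_ifs at h with h1 h2
  · rw [h1, SimpleGraph.dist_self]
    omega
  · rw [SimpleGraph.dist_eq_one_iff_adj.mpr h2]
  · exact absurd rfl h

lemma restP_row (hdeg : ∀ x : ↥S, 0 < G.degree (x : V)) (x : ↥S) :
    ∑ y : ↥S, restP G S x y = 1 := by
  classical
  have hd : (0:ℝ) < (G.degree (x:V) : ℝ) := by exact_mod_cast hdeg x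
  rw [← Finset.add_sum_erase _ _ (Finset.mem_univ x)]
  have hdiag : restP G S x x
      = ((G.neighborFinset (x:V)) \ S).card / (G.degree (x:V) : ℝ) := by
    unfold restP
    rw [if_pos rfl]
  have hoff : ∀ y ∈ Finset.univ.erase x, restP G S x y
      = if G.Adj (x:V) (y:V) then 1/(G.degree (x:V) : ℝ) else 0 := by
    intro y hy
    unfold restP
    rw [if_neg]
    intro hxy
    exact (Finset.ne_of_mem_erase hy) (Subtype.ext hxy.symm)
  rw [hdiag, Finset.sum_congr rfl hoff]
  rw [← Finset.sum_filter]
  rw [Finset.sum_const, nsmul_eq_mul]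
  have hcard : ((Finset.univ.erase x).filter (fun y : ↥S => G.Adj (x:V) (y:V))).card
      = ((G.neighborFinset (x:V)) ∩ S).card := by
    apply Finset.card_bij (fun (y : ↥S) _ => (y : V))
    · intro y hy
      simp only [Finset.mem_filter] at hy
      rw [Finset.mem_inter, SimpleGraph.mem_neighborFinset]
      exact ⟨hy.2, y.2⟩
    · intro y1 h1 y2 h2 hv
      exact Subtype.ext hv
    · intro v hv
      rw [Finset.mem_inter, SimpleGraph.mem_neighborFinset] at hv
      refine ⟨⟨v, hv.2⟩, ?_, rfl⟩
      simp only [Finset.mem_filter, Finset.mem_erase, Finset.mem_univ]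
      refine ⟨⟨?_, trivial⟩, hv.1⟩
      intro he
      have : (x:V) = v := by rw [← he]
      exact G.ne_of_adj hv.1 this
  rw [hcard]
  have hsplit : (((G.neighborFinset (x:V)) \ S).card : ℝ)
      + (((G.neighborFinset (x:V)) ∩ S).card : ℝ) = (G.degree (x:V) : ℝ) := by
    have := Finset.card_sdiff_add_card_inter (G.neighborFinset (x:V)) S
    have hdeg' : (G.neighborFinset (x:V)).card = G.degree (x:V) :=
      G.card_neighborFinset_eq_degree (x:V)
    rw [hdeg'] at this
    exact_mod_cast this
  field_simp
  linarith

lemma restPi_rev (hdeg : ∀ x : ↥S, 0 < G.degree (x : V)) (x y : ↥S) :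
    restPi G S x * restP G S x y = restPi G S y * restP G S y x := by
  by_cases hxy : (x:V) = (y:V)
  · have : x = y := Subtype.ext hxy
    rw [this]
  · unfold restP restPi
    rw [if_neg hxy]
    rw [if_neg (show ¬((y:V) = (x:V)) from fun h => hxy h.symm)]
    by_cases hadj : G.Adj (x:V) (y:V)
    · rw [if_pos hadj]
      rw [if_pos (show G.Adj (y:V) (x:V) from hadj.symm)]
      have dx : ((G.degree (x:V) : ℝ)) ≠ 0 := by
        have := hdeg x
        positivity
      have dy : ((G.degree (y:V) : ℝ)) ≠ 0 := by
        have := hdeg y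
        positivity
      have key : ∀ d : ℝ, d ≠ 0 →
          (d / (∑ z ∈ S, (G.degree z:ℝ))) * (1/d) = 1/(∑ z ∈ S, (G.degree z:ℝ)) := by
        intro d hd
        rcases eq_or_ne (∑ z ∈ S, (G.degree z:ℝ)) 0 with hT|hT
        · rw [hT]
          simp
        · field_simp
      rw [key _ dx, key _ dy]
    · rw [if_neg hadj]
      rw [if_neg (show ¬ G.Adj (y:V) (x:V) from fun h => hadj h.symm)]
      ring

lemma restPi_sum (hT : (0:ℝ) < ∑ z ∈ S, (G.degree z : ℝ)) :
    ∑ x : ↥S, restPi G S x = 1 := by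
  unfold restPi
  rw [← Finset.sum_div]
  rw [Finset.univ_eq_attach, Finset.sum_attach S (fun z => (G.degree z : ℝ))]
  field_simp

end MarkovCor

set_option maxHeartbeats 1000000 in
/-- **Threshold embeddings bound the graphic Markov type 2 constant**
(Corollary 2.4 / `cor:threshold`).

There is a universal constant `C > 0` such that: whenever a connected, locally finite graph
`G` admits a threshold embedding with distortion `D` into a Hilbert space (a family of
`1`-Lipschitz maps `F_k : V_G → H` with `d_G(x,y) ≥ 8^k → ‖F_k x - F_k y‖ ≥ 8^k/D`), then for
every finite `S ⊆ V_G` and every `t ∈ ℕ` the stationary random walk restricted to `S`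
satisfies `E[d_G(Z_0,Z_t)²] ≤ C D² t`; i.e. the graphic Markov type `2` constant of `G` is at
most `√C ⬝ D`. -/
theorem graphic_markov_type_of_threshold_embedding :
    ∃ C : ℝ, 0 < C ∧
      ∀ (V : Type u) (G : SimpleGraph V) [∀ v, Fintype (G.neighborSet v)],
        G.Connected →
        ∀ (H : Type v) [NormedAddCommGroup H] [InnerProductSpace ℝ H]
          (D : ℝ), 0 < D →
          ∀ F : ℕ → V → H,
            (∀ (k : ℕ) (x y : V), ‖F k x - F k y‖ ≤ (G.dist x y : ℝ)) →
            (∀ (k : ℕ) (x y : V), (8 : ℝ) ^ k ≤ (G.dist x y : ℝ) →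
              (8 : ℝ) ^ k / D ≤ ‖F k x - F k y‖) →
            ∀ (S : Finset V) (Ω : Type w) [MeasurableSpace Ω] (μ : Measure Ω),
              IsProbabilityMeasure μ →
              ∀ Z : ℕ → Ω → ↥S, IsStationaryRestrictedWalk G S μ Z →
                ∀ t : ℕ,
                  ∫ ω, (G.dist ((Z 0 ω : V)) ((Z t ω : V)) : ℝ) ^ 2 ∂μ ≤ C * D ^ 2 * t := by
  classical
  refine ⟨5376, by norm_num, ?_⟩
  intro V G _ hconn H _ _ D hD F hlip hthr S Ω _ μ hprob Z hw t
  rcases Nat.eq_zero_or_pos t with rfl|ht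
  · simp only [SimpleGraph.dist_self, Nat.cast_zero]
    norm_num
  have hΩ : Nonempty Ω := by
    by_contra hc
    rw [not_nonempty_iff] at hc
    have h1 : μ Set.univ = 1 := measure_univ
    have h2 : (Set.univ : Set Ω) = ∅ := Set.univ_eq_empty_iff.mpr hc
    rw [h2, measure_empty] at h1
    exact zero_ne_one h1
  obtain ⟨ω0⟩ := hΩ
  by_cases hdeg : ∀ x : ↥S, 0 < G.degree (x:V)
  swap
  · exfalso
    push_neg at hdeg
    obtain ⟨x, hx⟩ := hdeg
    have hx0 : G.degree (x:V) = 0 := Nat.le_zero.mp hx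
    have hZx : ∀ ω : Ω, Z 0 ω = x := by
      intro ω
      apply Subtype.ext
      have hiso : ∀ v : V, v = (x:V) := by
        intro v
        by_contra hv
        obtain ⟨w⟩ := hconn.preconnected (x:V) v
        cases w with
        | nil => exact hv rfl
        | cons h p =>
          have : 0 < G.degree (x:V) := (SimpleGraph.degree_pos_iff_exists_adj G (x:V)).mpr ⟨_, h⟩
          omega
      exact hiso _
    have hset : {ω : Ω | ∀ i : Fin 1, Z (i:ℕ) ω = (fun _ : Fin 1 => x) i} = Set.univ := by
      ext ω
      simp only [Set.mem_setOf_eq, Set.mem_univ, iff_true]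
      intro i
      have hi : (i:ℕ) = 0 := Nat.lt_one_iff.mp i.isLt
      rw [hi]
      exact hZx ω
    have hμ := hw.2 0 (fun _ => x)
    rw [hset, measure_univ] at hμ
    have hz : restPi G S x = 0 := by
      unfold restPi
      rw [hx0]
      simp
    rw [hz] at hμ
    simp at hμ
  -- main case
  set x0 : ↥S := Z 0 ω0 with hx0def
  have hD1 : 1 ≤ D := by
    obtain ⟨w, hwadj⟩ := (SimpleGraph.degree_pos_iff_exists_adj G (x0:V)).mp (hdeg x0)
    have hdist1 : G.dist (x0:V) w = 1 := SimpleGraph.dist_eq_one_iff_adj.mpr hwadj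
    have h8 : (8:ℝ)^0 ≤ (G.dist (x0:V) w : ℝ) := by
      rw [hdist1]; norm_num
    have hlow := hthr 0 (x0:V) w h8
    have hup := hlip 0 (x0:V) w
    rw [hdist1] at hup
    have h1 : 1/D ≤ 1 := by
      calc 1/D = (8:ℝ)^0/D := by norm_num
        _ ≤ ‖F 0 (x0:V) - F 0 w‖ := hlow
        _ ≤ ((1:ℕ):ℝ) := hup
        _ = 1 := by norm_num
    rwa [div_le_one hD] at h1
  have hT : (0:ℝ) < ∑ z ∈ S, (G.degree z : ℝ) := by
    apply Finset.sum_pos'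
    · intro z _
      positivity
    · exact ⟨(x0:V), x0.2, by exact_mod_cast hdeg x0⟩
  have hpos : ∀ x : ↥S, 0 < restPi G S x := by
    intro x
    unfold restPi
    have := hdeg x
    positivity
  have hrow := MarkovCor.restP_row G S hdeg
  have hrev := MarkovCor.restPi_rev G S hdeg
  have hp1 := MarkovCor.restPi_sum G S hT
  have hP0 : ∀ x y : ↥S, 0 ≤ restP G S x y := MarkovCor.restP_nonneg G S
  -- path space setup
  set p : (Fin (t+1) → ↥S) → ℝ :=
    fun x => restPi G S (x 0) * ∏ i : Fin t, restP G S (x i.castSucc) (x i.succ) with hpdef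
  have hppw : ∀ x, p x = MarkovCor.pw (fun a b => restP G S a b) (restPi G S) t x :=
    fun x => rfl
  set A : (Fin (t+1) → ↥S) → Set Ω :=
    fun x => {ω | ∀ i : Fin (t+1), Z (i:ℕ) ω = x i} with hAdef
  have hp : ∀ x, μ (A x) = ENNReal.ofReal (p x) := hw.2 t
  have hppos : ∀ x, 0 ≤ p x := fun x =>
    mul_nonneg (MarkovCor.restPi_nonneg G S _)
      (Finset.prod_nonneg fun i _ => MarkovCor.restP_nonneg G S _ _)
  have hmeasA : ∀ x, MeasurableSet (A x) := by
    intro x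
    have : A x = ⋂ i : Fin (t+1), (Z (i:ℕ))⁻¹' {x i} := by
      ext ω
      simp [hAdef, Set.mem_iInter]
    rw [this]
    exact MeasurableSet.iInter fun i => hw.1 _ _
  have hdisj : Pairwise (Function.onFun Disjoint A) := by
    intro x y hxy
    rw [Function.onFun, Set.disjoint_left]
    intro ω hx hy
    exact hxy (funext fun i => (hx i).symm.trans (hy i))
  have hcover : ⋃ x, A x = Set.univ := by
    ext ω
    simp only [Set.mem_iUnion, Set.mem_univ, iff_true]
    exact ⟨fun i => Z (i:ℕ) ω, fun i => rfl⟩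
  have hsum1 : ∑ x : Fin (t+1) → ↥S, p x = 1 := by
    have h1 : μ (⋃ x, A x) = ∑' x, μ (A x) := measure_iUnion hdisj hmeasA
    rw [hcover, measure_univ, tsum_fintype] at h1
    have h2 := congrArg ENNReal.toReal h1
    rw [ENNReal.toReal_one] at h2
    rw [ENNReal.toReal_sum (fun x _ => by rw [hp]; exact ENNReal.ofReal_ne_top)] at h2
    rw [Finset.sum_congr rfl
      (fun x _ => by rw [hp, ENNReal.toReal_ofReal (hppos x)])] at h2
    exact h2.symm
  have htrans : ∀ Φ : (Fin (t+1) → ↥S) → ℝ,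
      ∫ ω, Φ (fun i => Z (i:ℕ) ω) ∂μ = ∑ x : Fin (t+1) → ↥S, p x * Φ x := by
    intro Φ
    have hfun : (fun ω => Φ (fun i => Z (i:ℕ) ω))
        = fun ω => ∑ x : Fin (t+1) → ↥S, Set.indicator (A x) (fun _ => Φ x) ω := by
      funext ω
      have hx : ω ∈ A (fun i : Fin (t+1) => Z (i:ℕ) ω) := fun i => rfl
      rw [Finset.sum_eq_single_of_mem (fun i : Fin (t+1) => Z (i:ℕ) ω) (Finset.mem_univ _)]
      · rw [Set.indicator_of_mem hx]
      · intro y _ hy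
        rw [Set.indicator_of_notMem]
        intro hmem
        exact hy (funext fun i => (hmem i).symm)
    rw [hfun, MeasureTheory.integral_finset_sum]
    · apply Finset.sum_congr rfl
      intro x _
      rw [MeasureTheory.integral_indicator_const (Φ x) (hmeasA x)]
      rw [measureReal_def, hp x, ENNReal.toReal_ofReal (hppos x), smul_eq_mul]
    · intro x _
      exact (integrable_const (Φ x)).indicator (hmeasA x)
  -- band decomposition
  set d : (Fin (t+1) → ↥S) → ℕ :=
    fun x => G.dist ((x 0 : V)) ((x (Fin.last t) : V)) with hddef
  set Φ : (Fin (t+1) → ↥S) → ℝ := fun x => ((d x : ℕ) : ℝ)^2 with hΦdef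
  have hgoalint : ∫ ω, (G.dist ((Z 0 ω : V)) ((Z t ω : V)) : ℝ)^2 ∂μ
      = ∑ x : Fin (t+1) → ↥S, p x * Φ x := by
    rw [← htrans Φ]
    apply integral_congr_ae
    filter_upwards with ω
    rw [hΦdef, hddef]
    simp only [Fin.val_last, Fin.val_zero]
  rw [hgoalint]
  have ht1 : (1:ℝ) ≤ (t:ℝ) := by exact_mod_cast ht
  -- a.s. bound d ≤ t
  have hstepd : ∀ x : Fin (t+1) → ↥S, p x ≠ 0 → d x ≤ t := by
    intro x hx
    have hfac : ∀ i : Fin t, restP G S (x i.castSucc) (x i.succ) ≠ 0 := by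
      have hprod : (∏ i : Fin t, restP G S (x i.castSucc) (x i.succ)) ≠ 0 := by
        intro hc
        apply hx
        rw [hpdef]
        beta_reduce
        rw [hc, mul_zero]
      exact fun i => Finset.prod_ne_zero_iff.mp hprod i (Finset.mem_univ _)
    have key : ∀ s : ℕ, ∀ hs : s ≤ t, G.dist ((x 0 : V)) ((x ⟨s, by omega⟩ : V)) ≤ s := by
      intro s
      induction s with
      | zero =>
        intro _
        have : (⟨0, by omega⟩ : Fin (t+1)) = 0 := rfl
        rw [this, SimpleGraph.dist_self]
      | succ s ih =>
        intro hs
        have h1 := ih (by omega)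
        have hstep1 : G.dist ((x ⟨s, by omega⟩ : V)) ((x ⟨s+1, by omega⟩ : V)) ≤ 1 := by
          have h2 := MarkovCor.restP_ne_zero_imp G S (hfac ⟨s, hs⟩)
          have e1 : (⟨s, hs⟩ : Fin t).castSucc = (⟨s, by omega⟩ : Fin (t+1)) := rfl
          have e2 : (⟨s, hs⟩ : Fin t).succ = (⟨s+1, by omega⟩ : Fin (t+1)) := rfl
          rwa [e1, e2] at h2
        have htri := hconn.dist_triangle
          (u := ((x 0 : V))) (v := ((x ⟨s, by omega⟩ : V))) (w := ((x ⟨s+1, by omega⟩ : V)))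
        omega
    have := key t le_rfl
    have e : (⟨t, by omega⟩ : Fin (t+1)) = Fin.last t := rfl
    rwa [e] at this
  -- pointwise band bound
  set χ : ℕ → (Fin (t+1) → ↥S) → ℝ :=
    fun k x => if (8:ℝ)^k ≤ ((d x : ℕ) : ℝ) then 1 else 0 with hχdef
  have hχ01 : ∀ k x, 0 ≤ χ k x ∧ χ k x ≤ 1 := by
    intro k x
    rw [hχdef]
    beta_reduce
    split_ifs <;> norm_num
  have hband : ∀ x : Fin (t+1) → ↥S, p x ≠ 0 →
      Φ x ≤ ∑ k ∈ Finset.range (t+1), ((64:ℝ)^k * 64) * χ k x := by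
    intro x hx
    have hsumnn : ∀ k ∈ Finset.range (t+1), 0 ≤ ((64:ℝ)^k * 64) * χ k x := by
      intro k _
      have := (hχ01 k x).1
      positivity
    rcases Nat.eq_zero_or_pos (d x) with h0|h1
    · rw [hΦdef]
      beta_reduce
      rw [h0]
      simp only [Nat.cast_zero]
      rw [show ((0:ℝ))^2 = 0 by norm_num]
      exact Finset.sum_nonneg hsumnn
    · set k0 := Nat.log 8 (d x) with hk0def
      have hk1 : 8^k0 ≤ d x := Nat.pow_log_le_self 8 (by omega)
      have hk2 : d x < 8^(k0+1) := Nat.lt_pow_succ_log_self (by norm_num) _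
      have hk0t : k0 ∈ Finset.range (t+1) := by
        rw [Finset.mem_range]
        have h8 : k0 < 8^k0 := Nat.lt_pow_self (by norm_num)
        have hdt := hstepd x hx
        omega
      have hterm : Φ x ≤ ((64:ℝ)^k0 * 64) * χ k0 x := by
        have hcond : (8:ℝ)^k0 ≤ ((d x : ℕ) : ℝ) := by
          have : ((8^k0 : ℕ) : ℝ) ≤ ((d x : ℕ) : ℝ) := by exact_mod_cast hk1
          push_cast at this
          linarith
        rw [hχdef]
        beta_reduce
        rw [if_pos hcond, mul_one, hΦdef]
        beta_reduce
        have hlt : ((d x : ℕ) : ℝ) < (8:ℝ)^(k0+1) := by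
          have : ((d x : ℕ) : ℝ) < ((8^(k0+1) : ℕ) : ℝ) := by exact_mod_cast hk2
          push_cast at this
          linarith
        have h2 : ((d x : ℕ) : ℝ)^2 ≤ ((8:ℝ)^(k0+1))^2 := by
          apply pow_le_pow_left₀ (by positivity) (le_of_lt hlt)
        have h3 : ((8:ℝ)^(k0+1))^2 = (64:ℝ)^k0 * 64 := by
          rw [show (64:ℝ) = 8^2 from by norm_num]
          rw [← pow_mul, ← pow_mul, ← pow_add]
          congr 1
          ring
        linarith
      calc Φ x ≤ ((64:ℝ)^k0 * 64) * χ k0 x := hterm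
        _ ≤ ∑ k ∈ Finset.range (t+1), ((64:ℝ)^k * 64) * χ k x :=
            Finset.single_le_sum hsumnn hk0t
  -- fourth moments per scale
  have hE4 : ∀ k : ℕ, ∑ x : Fin (t+1) → ↥S,
      p x * ‖F k ((x (Fin.last t) : V)) - F k ((x 0 : V))‖^4 ≤ 405*(t:ℝ)^2 := by
    intro k
    have hstepf : ∀ a b : ↥S, restP G S a b ≠ 0 →
        ‖F k (a:V) - F k (b:V)‖ ≤ 1 := by
      intro a b hab
      have hd1 := MarkovCor.restP_ne_zero_imp G S hab
      have := hlip k (a:V) (b:V)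
      have hc : ((G.dist (a:V) (b:V) : ℕ) : ℝ) ≤ 1 := by exact_mod_cast hd1
      linarith
    have h4m := MarkovCor.fourth_moment (P := fun a b : ↥S => restP G S a b)
      (p0 := restPi G S) hP0 hrow hpos hp1 hrev
      (fun a : ↥S => F k (a:V)) hstepf t
    have hconv : ∑ x : Fin (t+1) → ↥S,
        p x * ‖F k ((x (Fin.last t) : V)) - F k ((x 0 : V))‖^4
        = ∑ z : Fin (t+1) → ↥S, MarkovCor.pw (fun a b : ↥S => restP G S a b)
            (restPi G S) t z
            * ‖(fun a : ↥S => F k (a:V)) (z (Fin.last t))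
                - (fun a : ↥S => F k (a:V)) (z 0)‖^4 := rfl
    rw [hconv]
    calc _ ≤ 270*(t:ℝ)^2 + 108*t + 27 := h4m
      _ ≤ 405*(t:ℝ)^2 := by nlinarith
  -- Chebyshev at each scale
  set q : ℕ → ℝ := fun k => ∑ x : Fin (t+1) → ↥S, p x * χ k x with hqdef
  have hq1 : ∀ k, q k ≤ 1 := by
    intro k
    rw [hqdef]
    beta_reduce
    rw [← hsum1]
    apply Finset.sum_le_sum
    intro x _
    calc p x * χ k x ≤ p x * 1 :=
          mul_le_mul_of_nonneg_left (hχ01 k x).2 (hppos x)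
      _ = p x := mul_one _
  have hq2 : ∀ k, q k ≤ (D/(8:ℝ)^k)^4 * (405*(t:ℝ)^2) := by
    intro k
    have h8pos : (0:ℝ) < (8:ℝ)^k := by positivity
    have hpt : ∀ x : Fin (t+1) → ↥S, χ k x
        ≤ (D/(8:ℝ)^k)^4 * ‖F k ((x (Fin.last t) : V)) - F k ((x 0 : V))‖^4 := by
      intro x
      rw [hχdef]
      beta_reduce
      split_ifs with hcond
      · have hA := hthr k ((x 0 : V)) ((x (Fin.last t) : V)) hcond
        have hrevn : ‖F k ((x 0 : V)) - F k ((x (Fin.last t) : V))‖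
            = ‖F k ((x (Fin.last t) : V)) - F k ((x 0 : V))‖ := norm_sub_rev _ _
        rw [hrevn] at hA
        have hs : ((8:ℝ)^k/D)^4 ≤ ‖F k ((x (Fin.last t) : V)) - F k ((x 0 : V))‖^4 :=
          pow_le_pow_left₀ (by positivity) hA 4
        have hone : ((8:ℝ)^k/D)^4 * (D/(8:ℝ)^k)^4 = 1 := by
          rw [← mul_pow]
          rw [div_mul_div_comm]
          rw [mul_comm D ((8:ℝ)^k)]
          rw [div_self (by positivity)]
          norm_num
        calc (1:ℝ) = ((8:ℝ)^k/D)^4 * (D/(8:ℝ)^k)^4 := hone.symm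
          _ ≤ ‖F k ((x (Fin.last t) : V)) - F k ((x 0 : V))‖^4 * (D/(8:ℝ)^k)^4 :=
              mul_le_mul_of_nonneg_right hs (by positivity)
          _ = (D/(8:ℝ)^k)^4 * ‖F k ((x (Fin.last t) : V)) - F k ((x 0 : V))‖^4 := by
              ring
      · positivity
    rw [hqdef]
    beta_reduce
    calc ∑ x : Fin (t+1) → ↥S, p x * χ k x
        ≤ ∑ x : Fin (t+1) → ↥S, p x * ((D/(8:ℝ)^k)^4
            * ‖F k ((x (Fin.last t) : V)) - F k ((x 0 : V))‖^4) := by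
          apply Finset.sum_le_sum
          intro x _
          exact mul_le_mul_of_nonneg_left (hpt x) (hppos x)
      _ = (D/(8:ℝ)^k)^4 * ∑ x : Fin (t+1) → ↥S,
            p x * ‖F k ((x (Fin.last t) : V)) - F k ((x 0 : V))‖^4 := by
          rw [Finset.mul_sum]
          apply Finset.sum_congr rfl
          intro x _
          ring
      _ ≤ (D/(8:ℝ)^k)^4 * (405*(t:ℝ)^2) :=
          mul_le_mul_of_nonneg_left (hE4 k) (by positivity)
  -- assemble
  set b : ℝ := 21 * D^2 * t with hbdef
  have hb1 : 1 ≤ b := by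
    rw [hbdef]
    nlinarith
  have hq0 : ∀ k, 0 ≤ q k := by
    intro k
    rw [hqdef]
    beta_reduce
    apply Finset.sum_nonneg
    intro x _
    exact mul_nonneg (hppos x) (hχ01 k x).1
  have hkey : ∀ k : ℕ, ((64:ℝ)^k * 64) * q k ≤ 64 * min ((64:ℝ)^k) (b^2/(64:ℝ)^k) := by
    intro k
    have h64pos : (0:ℝ) < (64:ℝ)^k := by positivity
    have hbr1 : ((64:ℝ)^k * 64) * q k ≤ 64 * (64:ℝ)^k := by
      calc ((64:ℝ)^k * 64) * q k ≤ ((64:ℝ)^k * 64) * 1 :=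
            mul_le_mul_of_nonneg_left (hq1 k) (by positivity)
        _ = 64 * (64:ℝ)^k := by ring
    have hbr2 : ((64:ℝ)^k * 64) * q k ≤ 64 * (b^2/(64:ℝ)^k) := by
      have hcomp : (64:ℝ)^k * ((D/(8:ℝ)^k)^4 * (405*(t:ℝ)^2)) ≤ b^2/(64:ℝ)^k := by
        have hpow : ((8:ℝ)^k)^4 = ((64:ℝ)^k)^2 := by
          rw [show (64:ℝ) = 8^2 from by norm_num, ← pow_mul, ← pow_mul, ← pow_mul]
          congr 1
          ring
        have hbsq : b^2 = 441 * D^4 * (t:ℝ)^2 := by rw [hbdef]; ring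
        rw [div_pow, hpow]
        rw [le_div_iff₀ h64pos]
        have heq : (64:ℝ)^k * (D^4/((64:ℝ)^k)^2 * (405*(t:ℝ)^2)) * (64:ℝ)^k
            = 405*D^4*(t:ℝ)^2 := by
          field_simp
        rw [heq, hbsq]
        nlinarith [mul_nonneg (pow_nonneg hD.le 4) (sq_nonneg (t:ℝ))]
      calc ((64:ℝ)^k * 64) * q k
          ≤ ((64:ℝ)^k * 64) * ((D/(8:ℝ)^k)^4 * (405*(t:ℝ)^2)) :=
            mul_le_mul_of_nonneg_left (hq2 k) (by positivity)
        _ = 64 * ((64:ℝ)^k * ((D/(8:ℝ)^k)^4 * (405*(t:ℝ)^2))) := by ring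
        _ ≤ 64 * (b^2/(64:ℝ)^k) := by linarith [hcomp]
    rcases le_total ((64:ℝ)^k) (b^2/(64:ℝ)^k) with hmm|hmm
    · rw [min_eq_left hmm]
      exact hbr1
    · rw [min_eq_right hmm]
      exact hbr2
  calc ∑ x : Fin (t+1) → ↥S, p x * Φ x
      ≤ ∑ x : Fin (t+1) → ↥S, p x * (∑ k ∈ Finset.range (t+1), ((64:ℝ)^k * 64) * χ k x) := by
        apply Finset.sum_le_sum
        intro x _
        by_cases hx : p x = 0
        · rw [hx, zero_mul, zero_mul]
        · exact mul_le_mul_of_nonneg_left (hband x hx) (hppos x)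
    _ = ∑ k ∈ Finset.range (t+1), ((64:ℝ)^k * 64) * q k := by
        have hswap : ∀ x : Fin (t+1) → ↥S,
            p x * (∑ k ∈ Finset.range (t+1), ((64:ℝ)^k * 64) * χ k x)
            = ∑ k ∈ Finset.range (t+1), ((64:ℝ)^k * 64) * (p x * χ k x) := by
          intro x
          rw [Finset.mul_sum]
          apply Finset.sum_congr rfl
          intro k _
          ring
        rw [Finset.sum_congr rfl (fun x _ => hswap x)]
        rw [Finset.sum_comm]
        apply Finset.sum_congr rfl
        intro k _
        rw [hqdef]
        beta_reduce
        rw [Finset.mul_sum]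
    _ ≤ ∑ k ∈ Finset.range (t+1), 64 * min ((64:ℝ)^k) (b^2/(64:ℝ)^k) :=
        Finset.sum_le_sum (fun k _ => hkey k)
    _ = 64 * ∑ k ∈ Finset.range (t+1), min ((64:ℝ)^k) (b^2/(64:ℝ)^k) := by
        rw [Finset.mul_sum]
    _ ≤ 64 * (4*b) :=
        mul_le_mul_of_nonneg_left (MarkovCor.geom_split b hb1 (t+1)) (by norm_num)
    _ = 5376 * D^2 * t := by
        rw [hbdef]
        ring

end
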